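/- For a finite group G and integer n ≥ 2, every prime subset of the Brandt semigroup B(G, n) has cardinality at least (n − 1)·|G|. -/

import Mathlib

/-- A nonempty subset `U` of a (multiplicative) semigroup is *prime* if
`a * b ∈ U` implies `a ∈ U` or `b ∈ U`. -/
def IsPrimeSubset {Γ : Type*} [Mul Γ] (U : Set Γ) : Prop :=
  U.Nonempty ∧ ∀ a b : Γ, a * b ∈ U → a ∈ U ∨ b ∈ U

/-- The Brandt semigroup `B(G, n)` over a group `G`: underlying set
`([n] × G × [n]) ∪ {0}`, encoded as `Option (Fin n × G × Fin n)` with `none`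
playing the role of the zero element `0`. -/
def Brandt (G : Type*) (n : ℕ) : Type _ := Option (Fin n × G × Fin n)

namespace Brandt

/-- The zero element `0` of the Brandt semigroup. -/
def zero {G : Type*} {n : ℕ} : Brandt G n := none

/-- The element `(i, a, j)` of the Brandt semigroup. -/
def elem {G : Type*} {n : ℕ} (i : Fin n) (a : G) (j : Fin n) : Brandt G n := some (i, a, j)

/-- Multiplication: `(i, a, j)(k, b, l) = (i, ab, l)` if `j = k` and `0` otherwise,
with `0` acting as a zero element. -/
def mul {G : Type*} [Group G] {n : ℕ} : Brandt G n → Brandt G n → Brandt G n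
  | none, _ => none
  | some _, none => none
  | some (i, a, j), some (k, b, l) => if j = k then some (i, a * b, l) else none

instance (G : Type*) [Group G] (n : ℕ) : Semigroup (Brandt G n) where
  mul := mul
  mul_assoc x y z := by
    show mul (mul x y) z = mul x (mul y z)
    rcases x with _ | ⟨i, a, j⟩ <;> rcases y with _ | ⟨k, b, l⟩ <;> rcases z with _ | ⟨m, c, p⟩ <;>
      (try by_cases h1 : j = k) <;> (try by_cases h2 : l = m) <;>
      first | rfl | (simp [mul, *, mul_assoc] <;> rfl)

instance (G : Type*) [Fintype G] (n : ℕ) : Fintype (Brandt G n) :=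
  inferInstanceAs (Fintype (Option (Fin n × G × Fin n)))

instance (G : Type*) [DecidableEq G] (n : ℕ) : DecidableEq (Brandt G n) :=
  inferInstanceAs (DecidableEq (Option (Fin n × G × Fin n)))

end Brandt

lemma Brandt.mul_elem {G : Type*} [Group G] {n : ℕ} (i : Fin n) (a : G) (j k : Fin n)
    (b : G) (l : Fin n) :
    Brandt.elem i a j * Brandt.elem k b l =
      if j = k then Brandt.elem i (a * b) l else Brandt.zero := by
  show Brandt.mul (G := G) _ _ = _
  simp [Brandt.mul, Brandt.elem, Brandt.zero]

lemma Brandt.elem_inj {G : Type*} {n : ℕ} {i i' : Fin n} {a a' : G} {j j' : Fin n}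
    (h : Brandt.elem i a j = Brandt.elem i' a' j') : i = i' ∧ a = a' ∧ j = j' := by
  have h2 : (some (i, a, j) : Option (Fin n × G × Fin n)) = some (i', a', j') := h
  simpa [Prod.ext_iff] using h2

/-- For a finite group `G` and `n ≥ 2`, every prime subset of the Brandt semigroup
`B(G, n)` has cardinality at least `(n - 1)|G|`. -/
theorem brandt_prime_subset_card_lower_bound {G : Type*} [Group G] [Fintype G]
    (n : ℕ) (hn : 2 ≤ n) (U : Set (Brandt G n)) (hU : IsPrimeSubset U) :
    (n - 1) * Fintype.card G ≤ U.ncard := by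
  classical
  obtain ⟨hne, hp⟩ := hU
  -- It suffices to find an injection from {k // k ≠ i₀} × G into U.
  have key : ∀ (i₀ : Fin n) (f : {k : Fin n // k ≠ i₀} × G → Brandt G n),
      Function.Injective f → (∀ x, f x ∈ U) → (n - 1) * Fintype.card G ≤ U.ncard := by
    intro i₀ f hinj hmem
    have hcard : Fintype.card ({k : Fin n // k ≠ i₀} × G) ≤ Fintype.card U := by
      apply Fintype.card_le_of_injective (fun x => ⟨f x, hmem x⟩)
      intro x y h
      exact hinj (Subtype.ext_iff.mp h)
    have hsub : Fintype.card {k : Fin n // k ≠ i₀} = n - 1 := by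
      have : Fintype.card {k : Fin n // k = i₀} = 1 := Fintype.card_subtype_eq i₀
      have h2 := Fintype.card_subtype_compl (fun k : Fin n => k = i₀)
      simpa [this] using h2
    rw [Fintype.card_prod, hsub] at hcard
    rwa [Set.ncard_eq_toFinset_card', Set.toFinset_card]
  by_cases h0 : (Brandt.zero : Brandt G n) ∈ U
  · -- zero is in U
    have h01 : (⟨0, by omega⟩ : Fin n) ≠ ⟨1, by omega⟩ := by
      intro h; exact absurd (congrArg Fin.val h) (by simp)
    set j₀ : Fin n := ⟨0, by omega⟩ with hj₀
    set k₀ : Fin n := ⟨1, by omega⟩ with hk₀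
    by_cases h1 : ∀ (i : Fin n) (a : G), Brandt.elem i a j₀ ∈ U
    · refine key j₀ (fun x => Brandt.elem x.1.1 x.2 j₀) ?_ (fun x => h1 _ _)
      intro x y h
      obtain ⟨h1', h2', -⟩ := Brandt.elem_inj h
      exact Prod.ext (Subtype.ext h1') h2'
    · push_neg at h1
      obtain ⟨i₁, a₁, hi₁⟩ := h1
      have hall : ∀ (b : G) (l : Fin n), Brandt.elem k₀ b l ∈ U := by
        intro b l
        have hmul : Brandt.elem i₁ a₁ j₀ * Brandt.elem k₀ b l = Brandt.zero := by
          rw [Brandt.mul_elem]; simp [h01]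
        have := hp _ _ (by rw [hmul]; exact h0)
        tauto
      refine key j₀ (fun x => Brandt.elem k₀ x.2 x.1.1) ?_ (fun x => hall _ _)
      intro x y h
      obtain ⟨-, h2', h3'⟩ := Brandt.elem_inj h
      exact Prod.ext (Subtype.ext h3') h2'
  · -- zero is not in U; U contains some element (i, a, j)
    obtain ⟨u, hu⟩ := hne
    obtain ⟨i, a, j, rfl⟩ : ∃ i a j, u = Brandt.elem i a j := by
      rcases u with _ | ⟨i, a, j⟩
      · exact absurd hu h0
      · exact ⟨i, a, j, rfl⟩
    set f : {k : Fin n // k ≠ i} × G → Brandt G n := fun x =>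
      if Brandt.elem i x.2 x.1.1 ∈ U then Brandt.elem i x.2 x.1.1
      else Brandt.elem x.1.1 (x.2⁻¹ * a) j with hf
    have hmem : ∀ x, f x ∈ U := by
      intro ⟨⟨k, hk⟩, b⟩
      have hmul : Brandt.elem i b k * Brandt.elem k (b⁻¹ * a) j
          = Brandt.elem i a j := by
        rw [Brandt.mul_elem]; simp [mul_inv_cancel_left]
      have hdisj := hp _ _ (by rw [hmul]; exact hu)
      simp only [hf]
      split
      · assumption
      · tauto
    refine key i f ?_ hmem
    intro ⟨⟨k, hk⟩, b⟩ ⟨⟨k', hk'⟩, b'⟩ h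
    simp only [hf] at h
    split_ifs at h with p q q
    · obtain ⟨-, h2', h3'⟩ := Brandt.elem_inj h
      exact Prod.ext (Subtype.ext h3') h2'
    · obtain ⟨h1', -, -⟩ := Brandt.elem_inj h
      exact absurd h1'.symm hk'
    · obtain ⟨h1', -, -⟩ := Brandt.elem_inj h
      exact absurd h1' hk
    · obtain ⟨h1', h2', -⟩ := Brandt.elem_inj h
      have : b = b' := by
        have := mul_right_cancel h2'
        simpa using this
      exact Prod.ext (Subtype.ext h1') this
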